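/- Let f : ℝ^d → ℝ be continuously differentiable with a nonempty set S of global minimizers, minimal value f⋆, ∅ ≠ S̃ ⊆ S, and suppose there exist L > 0, c₁ > 0, c₂ ≥ 0 such that ⟨∇f(x), x − proj_{S̃}(x)⟩ ≥ c₁ (f(x) − f⋆ + (1/(2L))‖∇f(x)‖²) − c₂ for all x ∈ ℝ^d. Let x^{k+1} = x^k − γ^k ∇f(x^k) with γ^k = c₁ (f(x^k) − f⋆)/‖∇f(x^k)‖² + c₁/(2L). Then for every K ≥ 0: min_{0≤k≤K} (f(x^k) − f⋆ + (1/(2L))‖∇f(x^k)‖²) ≤ 2L ‖x^0 − x^0_p‖²/(c₁² (K+1)) + 2c₂/c₁, where x^0_p := proj_{S̃}(x^0). -/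

import Mathlib

open scoped RealInnerProductSpace

/-- Example 4: under the unified parametric assumption with progress function
`P(x) = f(x) − f⋆ + (1/(2L))‖∇f(x)‖²` and the stepsize
`γᵏ = c₁(f(xᵏ) − f⋆)/‖∇f(xᵏ)‖² + c₁/(2L)`, gradient descent achieves an
`O(1/K)` rate for the minimum of the progress function up to `2c₂/c₁`. -/
theorem progress_with_gradient_term_rate
    {d : ℕ} (f : EuclideanSpace ℝ (Fin d) → ℝ)
    (hf : ContDiff ℝ 1 f)
    (S St : Set (EuclideanSpace ℝ (Fin d)))
    (hSne : S.Nonempty)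
    (hSmin : ∀ s ∈ S, ∀ y, f s ≤ f y)
    (fstar : ℝ) (hfstar : ∀ s ∈ S, f s = fstar)
    (hStS : St ⊆ S) (hStne : St.Nonempty)
    (proj : EuclideanSpace ℝ (Fin d) → EuclideanSpace ℝ (Fin d))
    (hproj : ∀ y, proj y ∈ St ∧ ∀ z ∈ St, ‖y - proj y‖ ≤ ‖y - z‖)
    (L c₁ c₂ : ℝ) (hL : 0 < L) (hc₁ : 0 < c₁) (hc₂ : 0 ≤ c₂)
    (hass : ∀ y, c₁ * (f y - fstar + 1 / (2 * L) * ‖gradient f y‖ ^ 2) - c₂ ≤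
      ⟪gradient f y, y - proj y⟫)
    (x : ℕ → EuclideanSpace ℝ (Fin d)) (γ : ℕ → ℝ)
    (hupd : ∀ k, x (k + 1) = x k - γ k • gradient f (x k))
    (hγ : ∀ k, γ k = c₁ * (f (x k) - fstar) / ‖gradient f (x k)‖ ^ 2 + c₁ / (2 * L))
    (K : ℕ) :
    (Finset.range (K + 1)).inf' ⟨0, Finset.mem_range.mpr (Nat.succ_pos K)⟩
        (fun k => f (x k) - fstar + 1 / (2 * L) * ‖gradient f (x k)‖ ^ 2) ≤
      2 * L * ‖x 0 - proj (x 0)‖ ^ 2 / (c₁ ^ 2 * (K + 1)) + 2 * c₂ / c₁ := by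
  set P : ℕ → ℝ := fun k => f (x k) - fstar + 1 / (2 * L) * ‖gradient f (x k)‖ ^ 2 with hP
  obtain ⟨s₀, hs₀⟩ := hSne
  have hfge : ∀ y, fstar ≤ f y := fun y => (hfstar s₀ hs₀) ▸ hSmin s₀ hs₀ y
  set m := (Finset.range (K + 1)).inf' ⟨0, Finset.mem_range.mpr (Nat.succ_pos K)⟩ P with hm
  by_cases hcase : ∃ k ∈ Finset.range (K + 1), P k ≤ 2 * c₂ / c₁
  · obtain ⟨k, hk, hPk⟩ := hcase
    have h1 : m ≤ P k := Finset.inf'_le _ hk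
    have h2 : 0 ≤ 2 * L * ‖x 0 - proj (x 0)‖ ^ 2 / (c₁ ^ 2 * ((K : ℝ) + 1)) := by positivity
    have h3 := le_trans h1 hPk
    nlinarith [h2, h3]
  · push_neg at hcase
    have hmgt : 2 * c₂ / c₁ < m := by
      obtain ⟨k₀, hk₀, hk₀'⟩ := Finset.exists_mem_eq_inf' (Finset.nonempty_range_add_one (n := K)) P
      rw [hm, hk₀']
      exact hcase k₀ hk₀
    have hmsub : 0 < c₁ * m - 2 * c₂ := by
      have := (div_lt_iff₀ hc₁).mp hmgt
      nlinarith
    have hgne : ∀ k ∈ Finset.range (K + 1), gradient f (x k) ≠ 0 := by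
      intro k hk hg
      have h1 := hass (x k)
      rw [hg] at h1
      simp only [inner_zero_left, norm_zero] at h1
      have h2 := (div_lt_iff₀ hc₁).mp (hcase k hk)
      have h3 : P k = f (x k) - fstar := by
        simp only [hP, hg, norm_zero]; ring
      rw [h3] at h2
      nlinarith
    set C := c₁ / (2 * L) * (c₁ * m - 2 * c₂) with hC
    have hCpos : 0 < C := mul_pos (by positivity) hmsub
    have hstep : ∀ k ∈ Finset.range (K + 1),
        ‖x (k + 1) - proj (x (k + 1))‖ ^ 2 ≤ ‖x k - proj (x k)‖ ^ 2 - C := by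
      intro k hk
      have hg : gradient f (x k) ≠ 0 := hgne k hk
      have hgn : ‖gradient f (x k)‖ ≠ 0 := norm_ne_zero_iff.mpr hg
      have hgsq : (0 : ℝ) < ‖gradient f (x k)‖ ^ 2 := by positivity
      have hPpos : 0 < P k := lt_of_le_of_lt (by positivity) (hcase k hk)
      have hγk : γ k = c₁ * P k / ‖gradient f (x k)‖ ^ 2 := by
        rw [hγ k]
        simp only [hP]
        field_simp
      have hγpos : 0 < γ k := by
        rw [hγk]; exact div_pos (mul_pos hc₁ hPpos) hgsq
      have hγlb : c₁ / (2 * L) ≤ γ k := by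
        rw [hγ k]
        have h0 : 0 ≤ c₁ * (f (x k) - fstar) / ‖gradient f (x k)‖ ^ 2 :=
          div_nonneg (mul_nonneg hc₁.le (by linarith [hfge (x k)])) hgsq.le
        linarith
      have hexp : ‖x (k + 1) - proj (x k)‖ ^ 2 =
          ‖x k - proj (x k)‖ ^ 2 - 2 * γ k * ⟪gradient f (x k), x k - proj (x k)⟫
            + (γ k) ^ 2 * ‖gradient f (x k)‖ ^ 2 := by
        rw [hupd k, sub_right_comm, norm_sub_sq_real, real_inner_smul_right,
          real_inner_comm, norm_smul]
        simp [Real.norm_eq_abs, mul_pow, sq_abs]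
        ring
      have hinner : c₁ * P k - c₂ ≤ ⟪gradient f (x k), x k - proj (x k)⟫ := hass (x k)
      have h2 : (γ k) ^ 2 * ‖gradient f (x k)‖ ^ 2 = γ k * (c₁ * P k) := by
        rw [hγk]; field_simp
      have hchain : ‖x (k + 1) - proj (x k)‖ ^ 2 ≤
          ‖x k - proj (x k)‖ ^ 2 - γ k * (c₁ * P k - 2 * c₂) := by
        have h1 : γ k * (c₁ * P k - c₂) ≤ γ k * ⟪gradient f (x k), x k - proj (x k)⟫ :=
          mul_le_mul_of_nonneg_left hinner hγpos.le
        rw [hexp, h2]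
        nlinarith
      have hCle : C ≤ γ k * (c₁ * P k - 2 * c₂) := by
        have hmP : m ≤ P k := Finset.inf'_le _ hk
        have hsub : c₁ * m - 2 * c₂ ≤ c₁ * P k - 2 * c₂ := by nlinarith
        exact mul_le_mul hγlb hsub hmsub.le hγpos.le
      have hprojle : ‖x (k + 1) - proj (x (k + 1))‖ ≤ ‖x (k + 1) - proj (x k)‖ :=
        (hproj (x (k + 1))).2 (proj (x k)) (hproj (x k)).1
      have hsq : ‖x (k + 1) - proj (x (k + 1))‖ ^ 2 ≤ ‖x (k + 1) - proj (x k)‖ ^ 2 :=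
        pow_le_pow_left₀ (norm_nonneg _) hprojle 2
      linarith
    have hind : ∀ n, n ≤ K + 1 →
        ‖x n - proj (x n)‖ ^ 2 ≤ ‖x 0 - proj (x 0)‖ ^ 2 - (n : ℝ) * C := by
      intro n hn
      induction n with
      | zero => simp
      | succ k ih =>
        have hk : k ∈ Finset.range (K + 1) := Finset.mem_range.mpr (by omega)
        have h1 := hstep k hk
        have h2 := ih (by omega)
        push_cast
        linarith
    have hfin := hind (K + 1) le_rfl
    have h0 : (0 : ℝ) ≤ ‖x (K + 1) - proj (x (K + 1))‖ ^ 2 := by positivity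
    have hKC : ((K : ℝ) + 1) * C ≤ ‖x 0 - proj (x 0)‖ ^ 2 := by
      push_cast at hfin; linarith
    have key : ((K : ℝ) + 1) * c₁ * (c₁ * m - 2 * c₂) ≤ 2 * L * ‖x 0 - proj (x 0)‖ ^ 2 := by
      have h2L : (0 : ℝ) < 2 * L := by linarith
      calc ((K : ℝ) + 1) * c₁ * (c₁ * m - 2 * c₂)
          = 2 * L * (((K : ℝ) + 1) * C) := by rw [hC]; field_simp
        _ ≤ 2 * L * ‖x 0 - proj (x 0)‖ ^ 2 := by
            exact mul_le_mul_of_nonneg_left hKC h2L.le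
    have hd : (0 : ℝ) < c₁ ^ 2 * ((K : ℝ) + 1) := by positivity
    rw [← sub_le_iff_le_add, le_div_iff₀ hd] at *
    calc (m - 2 * c₂ / c₁) * (c₁ ^ 2 * ((K : ℝ) + 1))
        = ((K : ℝ) + 1) * c₁ * (c₁ * m - 2 * c₂) := by field_simp
      _ ≤ 2 * L * ‖x 0 - proj (x 0)‖ ^ 2 := key
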